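/- Let K be an algebraically closed field of characteristic zero. Suppose a, b, c are n×n matrices over K, pairwise commuting, each annihilated by x³ - x², with a+b+c = I, a²+b²+c² = I, a³+b³+c³ = I. Then Kⁿ = ker(a - I) ⊕ ker(b - I) ⊕ ker(c - I). -/
import Mathlib

open Matrix

private lemma key_mem {K : Type*} [Field K] {n : ℕ} (M : Matrix (Fin n) (Fin n) K)
    (v : Fin n → K) :
    v ∈ LinearMap.ker (Matrix.toLin' (M - 1)) ↔ M *ᵥ v = v := by
  rw [LinearMap.mem_ker, Matrix.toLin'_apply, Matrix.sub_mulVec, Matrix.one_mulVec, sub_eq_zero]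

private lemma disj_aux {K : Type*} [Field K] {n : ℕ} {a b c : Matrix (Fin n) (Fin n) K}
    (hef : a ^ 2 * b ^ 2 = 0) (heg : a ^ 2 * c ^ 2 = 0) :
    Disjoint (LinearMap.ker (Matrix.toLin' (a - 1)))
      (LinearMap.ker (Matrix.toLin' (b - 1)) ⊔ LinearMap.ker (Matrix.toLin' (c - 1))) := by
  rw [Submodule.disjoint_def]
  intro v hv hv'
  obtain ⟨w, hw, u, hu, rfl⟩ := Submodule.mem_sup.mp hv'
  rw [key_mem] at hv hw hu
  have h1 : a ^ 2 *ᵥ (w + u) = w + u := by rw [sq, ← Matrix.mulVec_mulVec, hv, hv]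
  have h2 : b ^ 2 *ᵥ w = w := by rw [sq, ← Matrix.mulVec_mulVec, hw, hw]
  have h3 : c ^ 2 *ᵥ u = u := by rw [sq, ← Matrix.mulVec_mulVec, hu, hu]
  calc w + u = a ^ 2 *ᵥ (w + u) := h1.symm
    _ = a ^ 2 *ᵥ (b ^ 2 *ᵥ w) + a ^ 2 *ᵥ (c ^ 2 *ᵥ u) := by
        rw [Matrix.mulVec_add, h2, h3]
    _ = 0 := by
        rw [Matrix.mulVec_mulVec, Matrix.mulVec_mulVec, hef, heg, Matrix.zero_mulVec,
          Matrix.zero_mulVec, add_zero]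

theorem stmt18 {K : Type*} [Field K] [IsAlgClosed K] [CharZero K] {n : ℕ}
    (a b c : Matrix (Fin n) (Fin n) K)
    (hab : a * b = b * a) (hac : a * c = c * a) (hbc : b * c = c * b)
    (ha : a ^ 3 = a ^ 2) (hb : b ^ 3 = b ^ 2) (hc : c ^ 3 = c ^ 2)
    (h1 : a + b + c = 1)
    (h2 : a ^ 2 + b ^ 2 + c ^ 2 = 1)
    (h3 : a ^ 3 + b ^ 3 + c ^ 3 = 1) :
    iSupIndep
      (![LinearMap.ker (Matrix.toLin' (a - 1)),
         LinearMap.ker (Matrix.toLin' (b - 1)),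
         LinearMap.ker (Matrix.toLin' (c - 1))] :
        Fin 3 → Submodule K (Fin n → K)) ∧
    (⨆ i, (![LinearMap.ker (Matrix.toLin' (a - 1)),
         LinearMap.ker (Matrix.toLin' (b - 1)),
         LinearMap.ker (Matrix.toLin' (c - 1))] :
        Fin 3 → Submodule K (Fin n → K)) i) = ⊤ := by
  have cab : Commute a b := hab
  have cac : Commute a c := hac
  have cbc : Commute b c := hbc
  have cef : Commute (a ^ 2) (b ^ 2) := cab.pow_pow 2 2
  have ceg : Commute (a ^ 2) (c ^ 2) := cac.pow_pow 2 2
  have cfg : Commute (b ^ 2) (c ^ 2) := cbc.pow_pow 2 2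
  have idem : ∀ x : Matrix (Fin n) (Fin n) K, x ^ 3 = x ^ 2 → x ^ 2 * x ^ 2 = x ^ 2 := by
    intro x hx
    have : x ^ 2 * x ^ 2 = x ^ 3 * x := by rw [← pow_add, ← pow_succ]
    rw [this, hx, ← pow_succ, hx]
  have hee : a ^ 2 * a ^ 2 = a ^ 2 := idem a ha
  have hff : b ^ 2 * b ^ 2 = b ^ 2 := idem b hb
  have hgg : c ^ 2 * c ^ 2 = c ^ 2 := idem c hc
  -- e*f + e*g = 0
  have h4 : a ^ 2 * b ^ 2 + a ^ 2 * c ^ 2 = 0 := by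
    have h := congrArg (fun x => a ^ 2 * x) h2
    simp only [mul_add, mul_one, hee] at h
    rw [add_assoc, add_eq_left] at h
    exact h
  have h5 : a ^ 2 * b ^ 2 + a ^ 2 * b ^ 2 * c ^ 2 = 0 := by
    have h := congrArg (fun x => x * b ^ 2) h4
    simp only [add_mul, zero_mul] at h
    rwa [mul_assoc (a ^ 2) (b ^ 2) (b ^ 2), hff, mul_assoc (a ^ 2) (c ^ 2) (b ^ 2),
      ← cfg.eq, ← mul_assoc] at h
  have h6 : a ^ 2 * b ^ 2 * c ^ 2 + a ^ 2 * c ^ 2 = 0 := by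
    have h := congrArg (fun x => x * c ^ 2) h4
    simp only [add_mul, zero_mul] at h
    rwa [mul_assoc (a ^ 2) (c ^ 2) (c ^ 2), hgg] at h
  have h7 : a ^ 2 * b ^ 2 = a ^ 2 * c ^ 2 := by
    rw [eq_neg_of_add_eq_zero_left h5, eq_neg_of_add_eq_zero_left h6, neg_neg]
  have hef : a ^ 2 * b ^ 2 = 0 := by
    have h8 : a ^ 2 * b ^ 2 + a ^ 2 * b ^ 2 = 0 := by nth_rewrite 2 [h7]; exact h4
    have h9 : (2 : K) • (a ^ 2 * b ^ 2) = 0 := by rw [two_smul]; exact h8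
    exact (smul_eq_zero.mp h9).resolve_left two_ne_zero
  have heg : a ^ 2 * c ^ 2 = 0 := h7 ▸ hef
  have hfe : b ^ 2 * a ^ 2 = 0 := by rw [← cef.eq]; exact hef
  have hge : c ^ 2 * a ^ 2 = 0 := by rw [← ceg.eq]; exact heg
  have hfg : b ^ 2 * c ^ 2 = 0 := by
    have h := congrArg (fun x => b ^ 2 * x) h2
    simp only [mul_add, mul_one, hfe, hff] at h
    rw [zero_add] at h
    exact (add_eq_left).mp h
  have hgf : c ^ 2 * b ^ 2 = 0 := by rw [← cfg.eq]; exact hfg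
  constructor
  · intro i
    fin_cases i
    · refine Disjoint.mono_right ?_ (disj_aux hef heg)
      apply iSup_le; intro j; apply iSup_le; intro hj
      fin_cases j
      · simp at hj
      · simp only [Matrix.cons_val_one, Matrix.head_cons]; exact le_sup_left
      · simp only [Matrix.cons_val_two, Matrix.tail_cons, Matrix.head_cons]; exact le_sup_right
    · refine Disjoint.mono_right ?_ (disj_aux hfe hfg)
      apply iSup_le; intro j; apply iSup_le; intro hj
      fin_cases j
      · simp only [Matrix.cons_val_zero]; exact le_sup_left
      · simp at hj
      · simp only [Matrix.cons_val_two, Matrix.tail_cons, Matrix.head_cons]; exact le_sup_right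
    · refine Disjoint.mono_right ?_ (disj_aux hge hgf)
      apply iSup_le; intro j; apply iSup_le; intro hj
      fin_cases j
      · simp only [Matrix.cons_val_zero]; exact le_sup_left
      · simp only [Matrix.cons_val_one, Matrix.head_cons]; exact le_sup_right
      · simp at hj
  · rw [eq_top_iff]
    intro v _
    have hv : v = a ^ 2 *ᵥ v + b ^ 2 *ᵥ v + c ^ 2 *ᵥ v := by
      rw [← Matrix.add_mulVec, ← Matrix.add_mulVec, h2, Matrix.one_mulVec]
    have hma : a ^ 2 *ᵥ v ∈ LinearMap.ker (Matrix.toLin' (a - 1)) := by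
      have hx : a * a ^ 2 = a ^ 2 := by
        calc a * a ^ 2 = a ^ 3 := (pow_succ' a 2).symm
          _ = a ^ 2 := ha
      rw [key_mem, Matrix.mulVec_mulVec, hx]
    have hmb : b ^ 2 *ᵥ v ∈ LinearMap.ker (Matrix.toLin' (b - 1)) := by
      have hx : b * b ^ 2 = b ^ 2 := by
        calc b * b ^ 2 = b ^ 3 := (pow_succ' b 2).symm
          _ = b ^ 2 := hb
      rw [key_mem, Matrix.mulVec_mulVec, hx]
    have hmc : c ^ 2 *ᵥ v ∈ LinearMap.ker (Matrix.toLin' (c - 1)) := by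
      have hx : c * c ^ 2 = c ^ 2 := by
        calc c * c ^ 2 = c ^ 3 := (pow_succ' c 2).symm
          _ = c ^ 2 := hc
      rw [key_mem, Matrix.mulVec_mulVec, hx]
    rw [hv]
    refine add_mem (add_mem ?_ ?_) ?_
    · exact Submodule.mem_iSup_of_mem 0 hma
    · exact Submodule.mem_iSup_of_mem 1 hmb
    · exact Submodule.mem_iSup_of_mem 2 hmc
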